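/- Convergence of the Robin–Robin/Peaceman–Rachford iteration in the interface norm: let 𝒮₁, 𝒮₂ be the unbounded monotone operators on L²_Γ with (𝒮_iη − 𝒮_iμ, η−μ) ≥ c‖η−μ‖²_Z, let η ∈ D(𝒮₁) ∩ D(𝒮₂) solve (𝒮₁+𝒮₂)η = 0, and let (η₁ⁿ, η₂ⁿ) be the Peaceman–Rachford iterates: (s₀I+𝒮₁)η₁ⁿ = (s₀I−𝒮₂)η₂ⁿ⁻¹, (s₀I+𝒮₂)η₂ⁿ = (s₀I−𝒮₁)η₁ⁿ, with s₀ > 0 and η₂⁰ ∈ D(𝒮₂). If (𝒮_iη_iⁿ − 𝒮_iη, η_iⁿ − η)_{L²_Γ} → 0 as n → ∞, then ‖η₁ⁿ − η‖_Z + ‖η₂ⁿ − η‖_Z → 0. -/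

import Mathlib

open Filter

/-- Convergence of the Robin–Robin/Peaceman–Rachford iteration in the
interface norm.  `Z ↪ L²_Γ` is a continuous dense embedding, `𝒮₁, 𝒮₂` are (affine) operators
on `L²_Γ` with domains `D₁, D₂ ⊆ range ι`, strongly monotone with respect to the stronger
`Z`-norm; `η` solves `(𝒮₁+𝒮₂)η = 0`, and `(η₁ⁿ, η₂ⁿ)` are the Peaceman–Rachford iterates
with parameter `s₀ > 0`.  If the monotonicity pairings
`(𝒮_iη_iⁿ − 𝒮_iη, η_iⁿ − η)_{L²_Γ}` tend to `0`, then
`‖η₁ⁿ − η‖_Z + ‖η₂ⁿ − η‖_Z → 0`. -/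

private lemma sq_tendsto_zero {f : ℕ → ℝ} (hf : ∀ n, 0 ≤ f n)
    (h : Tendsto (fun n => f n ^ 2) atTop (nhds 0)) :
    Tendsto f atTop (nhds 0) := by
  have : Tendsto (fun n => Real.sqrt (f n ^ 2)) atTop (nhds 0) := by
    simpa [Function.comp_def] using (Real.continuous_sqrt.continuousAt (x := (0:ℝ))).tendsto.comp h
  simpa [Real.sqrt_sq (hf _)] using this

theorem stmt_18 {Z L2Γ : Type*}
    [NormedAddCommGroup Z] [NormedSpace ℝ Z]
    [NormedAddCommGroup L2Γ] [InnerProductSpace ℝ L2Γ]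
    (ι : Z →L[ℝ] L2Γ) (hinj : Function.Injective ι) (hdense : DenseRange ι)
    (D1 D2 : Set L2Γ) (S1 S2 : L2Γ → L2Γ)
    {c : ℝ} (hc : 0 < c)
    (hmono1 : ∀ ξ ζ : Z, ι ξ ∈ D1 → ι ζ ∈ D1 →
      c * ‖ξ - ζ‖ ^ 2 ≤ (inner ℝ (S1 (ι ξ) - S1 (ι ζ)) (ι ξ - ι ζ) : ℝ))
    (hmono2 : ∀ ξ ζ : Z, ι ξ ∈ D2 → ι ζ ∈ D2 →
      c * ‖ξ - ζ‖ ^ 2 ≤ (inner ℝ (S2 (ι ξ) - S2 (ι ζ)) (ι ξ - ι ζ) : ℝ))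
    (η : Z) (hη1 : ι η ∈ D1) (hη2 : ι η ∈ D2)
    (hsol : S1 (ι η) + S2 (ι η) = 0)
    (s₀ : ℝ) (hs₀ : 0 < s₀)
    (η1 η2 : ℕ → Z)
    (hd1 : ∀ n, ι (η1 n) ∈ D1) (hd2 : ∀ n, ι (η2 n) ∈ D2)
    (hit1 : ∀ n : ℕ,
      s₀ • ι (η1 (n + 1)) + S1 (ι (η1 (n + 1))) = s₀ • ι (η2 n) - S2 (ι (η2 n)))
    (hit2 : ∀ n : ℕ,
      s₀ • ι (η2 (n + 1)) + S2 (ι (η2 (n + 1))) = s₀ • ι (η1 (n + 1)) - S1 (ι (η1 (n + 1))))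
    (hlim1 : Tendsto (fun n : ℕ =>
        (inner ℝ (S1 (ι (η1 n)) - S1 (ι η)) (ι (η1 n) - ι η) : ℝ)) atTop (nhds 0))
    (hlim2 : Tendsto (fun n : ℕ =>
        (inner ℝ (S2 (ι (η2 n)) - S2 (ι η)) (ι (η2 n) - ι η) : ℝ)) atTop (nhds 0)) :
    Tendsto (fun n : ℕ => ‖η1 n - η‖ + ‖η2 n - η‖) atTop (nhds 0) := by
  have key : ∀ (f : ℕ → ℝ) (g : ℕ → ℝ), (∀ n, c * f n ^ 2 ≤ g n) →
      Tendsto g atTop (nhds 0) → (∀ n, 0 ≤ f n) → Tendsto f atTop (nhds 0) := by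
    intro f g hle hg hf
    apply sq_tendsto_zero hf
    have h1 : Tendsto (fun n => c * f n ^ 2) atTop (nhds 0) := by
      apply tendsto_of_tendsto_of_tendsto_of_le_of_le tendsto_const_nhds hg
      · intro n; positivity
      · intro n; exact hle n
    have := h1.const_mul (c⁻¹)
    simp only [mul_zero] at this
    have heq : (fun n => c⁻¹ * (c * f n ^ 2)) = fun n => f n ^ 2 := by
      funext n; field_simp
    rwa [heq] at this
  have h1 := key (fun n => ‖η1 n - η‖) _ (fun n => hmono1 (η1 n) η (hd1 n) hη1) ?_
      (fun n => norm_nonneg _)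
  have h2 := key (fun n => ‖η2 n - η‖) _ (fun n => hmono2 (η2 n) η (hd2 n) hη2) ?_
      (fun n => norm_nonneg _)
  · simpa using h1.add h2
  · simpa [map_sub] using hlim2
  · simpa [map_sub] using hlim1
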